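/- Let $\mathbb{K}$ be a field of characteristic $p$ with $p \nmid n$, $n > 1$, and $h \in \mathbb{F}_p \setminus \{0\}$ with representative $1 \le \tilde h \le p-1$. Suppose $0 < \lfloor n\tilde h/p \rfloor < n - 1$. Let $Q^{(\ell p -1)}(z, h)$ and $Q^{(mp-1)}(z, -h)$ be the $p$-hypergeometric solutions. Then for each $k$, the rank-one operator on $V = \{v \in \mathbb{K}^n : \sum v_i = 0\}$ defined by $\Psi_k(v) = \frac{h}{C_k(z)^p}\, S\Big( \sum_{m} Q^{(mp-1)}(z,-h) z_k^{p(m-1)},\, v \Big) \cdot \sum_{\ell} Q^{(\ell p -1)}(z,h) z_k^{p(\ell-1)}$ annihilates every $p$-hypergeometric solution $Q^{(\ell' p - 1)}(z, h)$, where $S$ is the Shapovalov form $S(x,y) = \sum_a x_a y_a$ and $C_k(z) = \prod_{i \ne k}(z_k - z_i)$. -/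

import Mathlib

open Polynomial

namespace Stmt19Aux

variable {K : Type*} [Field K]

/-- `ℤ`-indexed coefficient of a polynomial. -/
noncomputable def cz (f : Polynomial K) (c : ℤ) : K :=
  if 0 ≤ c then f.coeff c.toNat else 0

lemma cz_neg (f : Polynomial K) {c : ℤ} (hc : c < 0) : cz f c = 0 := by
  simp [cz, not_le.2 hc]

lemma cz_natCast (f : Polynomial K) (n : ℕ) : cz f (n : ℤ) = f.coeff n := by
  simp [cz]

lemma cz_sum {ι : Type*} (s : Finset ι) (f : ι → Polynomial K) (c : ℤ) :
    cz (∑ a ∈ s, f a) c = ∑ a ∈ s, cz (f a) c := by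
  unfold cz
  split
  · exact finset_sum_coeff s f _
  · simp

lemma cz_C_mul (r : K) (f : Polynomial K) (c : ℤ) :
    cz (C r * f) c = r * cz f c := by
  unfold cz; split <;> simp

lemma cz_XsubC_mul (r : K) (f : Polynomial K) (c : ℤ) :
    cz ((X - C r) * f) c = cz f (c - 1) - r * cz f c := by
  rcases lt_trichotomy c 0 with hc | hc | hc
  · rw [cz_neg _ hc, cz_neg _ hc, cz_neg f (show c - 1 < 0 by omega)]; ring
  · subst hc
    have h1 : (0 : ℤ) - 1 = -1 := by norm_num
    have hc0 : ((X - C r) * f).coeff 0 = -r * f.coeff 0 := by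
      rw [mul_coeff_zero, coeff_sub, coeff_X_zero, coeff_C]
      simp
    rw [h1, cz_neg f (show (-1 : ℤ) < 0 by norm_num)]
    simp only [cz, le_refl, if_pos, Int.toNat_zero, hc0]
    ring
  · obtain ⟨a, rfl⟩ : ∃ a : ℕ, c = (a : ℤ) + 1 := ⟨(c - 1).toNat, by omega⟩
    have h2 : ((a : ℤ) + 1 - 1) = (a : ℤ) := by ring
    have h1 : ((a : ℤ) + 1) = ((a + 1 : ℕ) : ℤ) := by push_cast; ring
    rw [h2, h1, cz_natCast, cz_natCast, cz_natCast, mul_comm, coeff_mul_X_sub_C]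
    ring

lemma cz_derivative (f : Polynomial K) (c : ℤ) :
    cz (derivative f) c = ((c + 1 : ℤ) : K) * cz f (c + 1) := by
  rcases lt_trichotomy c (-1) with hc | hc | hc
  · rw [cz_neg (derivative f) (show c < 0 by omega), cz_neg f (show c + 1 < 0 by omega)]; ring
  · subst hc
    rw [cz_neg (derivative f) (show (-1 : ℤ) < 0 by norm_num)]
    norm_num
  · obtain ⟨a, rfl⟩ : ∃ a : ℕ, c = (a : ℤ) := ⟨c.toNat, by omega⟩
    have h1 : ((a : ℤ) + 1) = ((a + 1 : ℕ) : ℤ) := by push_cast; ring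
    rw [cz_natCast, h1, cz_natCast, coeff_derivative]
    push_cast; ring

/-- Derivative of a finite product (Finset version). -/
lemma derivative_finset_prod {ι : Type*} [DecidableEq ι] (s : Finset ι) (f : ι → Polynomial K) :
    derivative (∏ b ∈ s, f b) = ∑ b ∈ s, (∏ a ∈ s.erase b, f a) * derivative (f b) := by
  induction s using Finset.induction_on with
  | empty => simp
  | insert x s hx ih =>
    rw [Finset.prod_insert hx, derivative_mul, Finset.sum_insert hx, ih,
      Finset.erase_insert hx, Finset.mul_sum]
    congr 1
    · ring
    · refine Finset.sum_congr rfl fun b hb => ?_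
      rw [Finset.erase_insert_of_ne (by rintro rfl; exact hx hb),
        Finset.prod_insert (fun hmem => hx (Finset.mem_of_mem_erase hmem))]
      ring

section Orth

variable {p : ℕ} [Fact p.Prime] [CharP K p] {n : ℕ}

/-- `P^e / (X - z_a)` -/
noncomputable def Af (z : Fin n → K) (e : ℕ) (a : Fin n) : Polynomial K :=
  ((X : Polynomial K) - C (z a)) ^ (e - 1) *
    ∏ s ∈ Finset.univ.erase a, ((X : Polynomial K) - C (z s)) ^ e

/-- `P^e` -/
noncomputable def Pf (z : Fin n → K) (e : ℕ) : Polynomial K :=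
  ∏ s : Fin n, ((X : Polynomial K) - C (z s)) ^ e

lemma XsubC_mul_Af (z : Fin n → K) (e : ℕ) (he : 1 ≤ e) (a : Fin n) :
    ((X : Polynomial K) - C (z a)) * Af z e a = Pf z e := by
  unfold Af Pf
  rw [← mul_assoc, ← pow_succ', Nat.sub_add_cancel he]
  exact Finset.mul_prod_erase Finset.univ
    (fun s => ((X : Polynomial K) - C (z s)) ^ e) (Finset.mem_univ a)

lemma Af_rec (z : Fin n → K) (e : ℕ) (he : 1 ≤ e) (a : Fin n) (c : ℤ) :
    cz (Af z e a) (c - 1) = z a * cz (Af z e a) c + cz (Pf z e) c := by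
  have h := cz_XsubC_mul (z a) (Af z e a) c
  rw [XsubC_mul_Af z e he a] at h
  linear_combination -h

lemma derivative_Pf (z : Fin n → K) (e : ℕ) :
    derivative (Pf z e) = C (e : K) * ∑ a : Fin n, Af z e a := by
  unfold Pf
  rw [derivative_finset_prod, Finset.mul_sum]
  refine Finset.sum_congr rfl fun a _ => ?_
  rw [derivative_pow, derivative_sub, derivative_X, derivative_C]
  unfold Af
  ring

lemma sum_cz_Af (z : Fin n → K) (e : ℕ) (c : ℤ) :
    ((e : K)) * ∑ a : Fin n, cz (Af z e a) c = ((c + 1 : ℤ) : K) * cz (Pf z e) (c + 1) := by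
  rw [← cz_derivative, derivative_Pf z e, cz_C_mul, cz_sum]

/-- Key orthogonality: `S(Q^{(mp-1)}(z,-h), Q^{(ℓp-1)}(z,h)) = 0`. -/
lemma orth (z : Fin n → K) {h : ℕ} (hh1 : 1 ≤ h) (hh2 : h ≤ p - 1)
    {ℓ m : ℕ} (hℓ : 1 ≤ ℓ) (hm : 1 ≤ m) :
    ∑ a : Fin n, cz (Af z (p - h) a) ((m * p : ℤ) - 1) * cz (Af z h a) ((ℓ * p : ℤ) - 1) = 0 := by
  have hp : p.Prime := Fact.out
  have hp2 : 2 ≤ p := hp.two_le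
  have hhp : h ≤ p := by omega
  have he' : 1 ≤ p - h := by omega
  have hcast : ((h : K)) ≠ 0 := by
    rw [Ne, CharP.cast_eq_zero_iff K p]
    exact Nat.not_dvd_of_pos_of_lt (by omega) (by omega)
  have hcastp : ((p : K)) = 0 := CharP.cast_eq_zero K p
  have hcast' : (((p - h : ℕ)) : K) = -(h : K) := by
    rw [Nat.cast_sub hhp, hcastp]; ring
  set N : ℤ := (ℓ * p : ℤ) + (m * p : ℤ) - 2 with hN
  set w : ℤ → K :=
    fun c => ∑ a : Fin n, cz (Af z h a) c * cz (Af z (p - h) a) (N - c) with hw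
  set U : ℤ → K :=
    fun c => ((c : ℤ) : K) * cz (Pf z h) c * cz (Pf z (p - h)) (N + 2 - c) with hU
  have step : ∀ c : ℤ, (h : K) * w c = (h : K) * w (c - 1) + U (c + 1) - U c := by
    intro c
    have key : (∑ a : Fin n, cz (Af z h a) (c - 1) * cz (Af z (p - h) a) (N - c + 1))
        - (∑ a : Fin n, cz (Af z h a) c * cz (Af z (p - h) a) (N - c))
        = cz (Pf z h) c * (∑ a : Fin n, cz (Af z (p - h) a) (N - c + 1))
          - cz (Pf z (p - h)) (N - c + 1) * (∑ a : Fin n, cz (Af z h a) c) := by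
      rw [Finset.mul_sum, Finset.mul_sum, ← Finset.sum_sub_distrib, ← Finset.sum_sub_distrib]
      refine Finset.sum_congr rfl fun a _ => ?_
      rw [Af_rec z h hh1 a c]
      have hB' := Af_rec z (p - h) he' a (N - c + 1)
      rw [show N - c + 1 - 1 = N - c by ring] at hB'
      rw [hB']
      ring
    have hA : (h : K) * ∑ a : Fin n, cz (Af z h a) c
        = ((c + 1 : ℤ) : K) * cz (Pf z h) (c + 1) := sum_cz_Af z h c
    have hNc : ((N - c + 2 : ℤ) : K) = -((c : ℤ) : K) := by
      have h0 : ((N - c + 2 : ℤ) : K) = ((ℓ * p : ℤ) : K) + ((m * p : ℤ) : K) - ((c : ℤ) : K) := by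
        rw [hN]; push_cast; ring
      rw [h0]
      push_cast [hcastp]
      ring
    have hB : (h : K) * ∑ a : Fin n, cz (Af z (p - h) a) (N - c + 1)
        = ((c : ℤ) : K) * cz (Pf z (p - h)) (N - c + 2) := by
      have h0 := sum_cz_Af z (p - h) (N - c + 1)
      rw [hcast'] at h0
      rw [show (N - c + 1 + 1 : ℤ) = N - c + 2 by ring, hNc] at h0
      linear_combination -h0
    simp only [hw, hU]
    rw [show N - (c - 1) = N - c + 1 by ring,
      show N + 2 - (c + 1) = N - c + 1 by ring,
      show N + 2 - c = N - c + 2 by ring]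
    linear_combination (-(h : K)) * key + cz (Pf z (p - h)) (N - c + 1) * hA
      - cz (Pf z h) c * hB
  have tele : ∀ t : ℕ, (h : K) * w ((ℓ * p : ℤ) - 1 + t)
      = (h : K) * w ((ℓ * p : ℤ) - 1) + U ((ℓ * p : ℤ) + t) - U (ℓ * p : ℤ) := by
    intro t
    induction t with
    | zero => simp
    | succ t ih =>
      have hs := step ((ℓ * p : ℤ) - 1 + t + 1)
      rw [show ((ℓ * p : ℤ) - 1 + t + 1 - 1) = (ℓ * p : ℤ) - 1 + t by ring] at hs
      rw [show ((ℓ * p : ℤ) - 1 + ((t : ℕ) + 1 : ℕ)) = (ℓ * p : ℤ) - 1 + t + 1 by push_cast; ring,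
        hs, ih,
        show ((ℓ * p : ℤ) - 1 + t + 1 + 1) = (ℓ * p : ℤ) + ((t : ℕ) + 1 : ℕ) by push_cast; ring,
        show ((ℓ * p : ℤ) - 1 + t + 1) = (ℓ * p : ℤ) + ((t : ℕ) : ℤ) by ring]
      ring
  have hend := tele (m * p)
  have hwN1 : w ((ℓ * p : ℤ) - 1 + ((m * p : ℕ) : ℤ)) = 0 := by
    simp only [hw]
    refine Finset.sum_eq_zero fun a _ => ?_
    rw [show (N - ((ℓ * p : ℤ) - 1 + ((m * p : ℕ) : ℤ))) = -1 by rw [hN]; push_cast; ring]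
    rw [cz_neg _ (show (-1 : ℤ) < 0 by norm_num)]
    ring
  have hU1 : U ((ℓ * p : ℤ) + ((m * p : ℕ) : ℤ)) = 0 := by
    simp only [hU]
    rw [show ((((ℓ * p : ℤ) + ((m * p : ℕ) : ℤ)) : ℤ) : K) = 0 by push_cast [hcastp]; ring]
    ring
  have hU2 : U (ℓ * p : ℤ) = 0 := by
    simp only [hU]
    rw [show (((ℓ * p : ℤ)) : K) = 0 by push_cast [hcastp]; ring]
    ring
  rw [hwN1, hU1, hU2] at hend
  have hw0 : w ((ℓ * p : ℤ) - 1) = 0 := by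
    have h0 : (h : K) * w ((ℓ * p : ℤ) - 1) = 0 := by linear_combination -hend
    rcases mul_eq_zero.mp h0 with h1 | h1
    · exact absurd h1 hcast
    · exact h1
  simp only [hw] at hw0
  rw [← hw0]
  refine Finset.sum_congr rfl fun a _ => ?_
  rw [show (N - ((ℓ * p : ℤ) - 1)) = (m * p : ℤ) - 1 by rw [hN]; ring]
  ring

end Orth

end Stmt19Aux

open Stmt19Aux in
theorem stmt_19 (p : ℕ) [Fact p.Prime] (K : Type*) [Field K] [CharP K p]
    (n : ℕ) (hn : 1 < n) (hpn : ¬ p ∣ n)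
    (h : ℕ) (hh1 : 1 ≤ h) (hh2 : h ≤ p - 1)
    (hd1 : 0 < n * h / p) (hd2 : n * h / p < n - 1)
    (z : Fin n → K) (hz : Function.Injective z)
    (Qp Qm : ℕ → Fin n → K)
    (hQp : ∀ (N : ℕ) (j : Fin n), Qp N j =
      ((((X : Polynomial K) - Polynomial.C (z j)) ^ (h - 1) *
        ∏ s ∈ Finset.univ.erase j,
          ((X : Polynomial K) - Polynomial.C (z s)) ^ h).coeff N))
    (hQm : ∀ (N : ℕ) (j : Fin n), Qm N j =
      ((((X : Polynomial K) - Polynomial.C (z j)) ^ ((p - h) - 1) *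
        ∏ s ∈ Finset.univ.erase j,
          ((X : Polynomial K) - Polynomial.C (z s)) ^ (p - h)).coeff N))
    (k : Fin n) (ℓ' : ℕ) (hℓ' : ℓ' ∈ Finset.Icc 1 (n * h / p)) :
    ∀ j : Fin n,
      (h : K) / (∏ i ∈ Finset.univ.erase k, (z k - z i)) ^ p *
        (∑ a : Fin n,
          (∑ m ∈ Finset.Icc 1 (n * (p - h) / p), Qm (m * p - 1) a * z k ^ (p * (m - 1))) *
            Qp (ℓ' * p - 1) a) *
        (∑ ℓ ∈ Finset.Icc 1 (n * h / p), Qp (ℓ * p - 1) j * z k ^ (p * (ℓ - 1))) = 0 := by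
  intro j
  have hp : p.Prime := Fact.out
  have hℓ1 : 1 ≤ ℓ' := (Finset.mem_Icc.mp hℓ').1
  have hmid : (∑ a : Fin n,
      (∑ m ∈ Finset.Icc 1 (n * (p - h) / p), Qm (m * p - 1) a * z k ^ (p * (m - 1))) *
        Qp (ℓ' * p - 1) a) = 0 := by
    have swap : (∑ a : Fin n,
        (∑ m ∈ Finset.Icc 1 (n * (p - h) / p), Qm (m * p - 1) a * z k ^ (p * (m - 1))) *
          Qp (ℓ' * p - 1) a)
        = ∑ m ∈ Finset.Icc 1 (n * (p - h) / p),
            z k ^ (p * (m - 1)) * ∑ a : Fin n, Qm (m * p - 1) a * Qp (ℓ' * p - 1) a := by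
      simp_rw [Finset.sum_mul, Finset.mul_sum]
      rw [Finset.sum_comm]
      exact Finset.sum_congr rfl fun m _ => Finset.sum_congr rfl fun a _ => by ring
    rw [swap]
    refine Finset.sum_eq_zero fun m hm => ?_
    have hm1 : 1 ≤ m := (Finset.mem_Icc.mp hm).1
    have hzero : (∑ a : Fin n, Qm (m * p - 1) a * Qp (ℓ' * p - 1) a) = 0 := by
      have horth := orth (K := K) (p := p) z hh1 hh2 hℓ1 hm1
      rw [← horth]
      refine Finset.sum_congr rfl fun a _ => ?_
      rw [hQm, hQp]
      have hmp : 1 ≤ m * p := Nat.mul_pos (by omega) hp.pos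
      have hlp : 1 ≤ ℓ' * p := Nat.mul_pos (by omega) hp.pos
      have e1 : ((m * p : ℤ) - 1) = ((m * p - 1 : ℕ) : ℤ) := by
        rw [Nat.cast_sub hmp]; push_cast; ring
      have e2 : ((ℓ' * p : ℤ) - 1) = ((ℓ' * p - 1 : ℕ) : ℤ) := by
        rw [Nat.cast_sub hlp]; push_cast; ring
      rw [e1, e2, cz_natCast, cz_natCast]
      rfl
    rw [hzero, mul_zero]
  rw [hmid, mul_zero, zero_mul]
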